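/- Let p : ℝ → ℝ be a function with closed graph, let F = ℝ \ G where G is the (open) set of continuity points of p. Suppose F has no isolated points, G is dense, and p extends continuously to the closure of each connected component of G. Then every point x₀ ∈ F at which the restriction p|_F : F → ℝ is continuous is in fact a continuity point of p on ℝ. -/

import Mathlib

lemma helper6 (p : ℝ → ℝ) (G F : Set ℝ) (hF : F = Gᶜ)
    (hGc : ∀ x ∈ G, ContinuousAt p x)
    (hext : ∀ a b : ℝ, Set.Ioo a b ⊆ G → ContinuousOn p (Set.Icc a b))
    (x₀ : ℝ) (hx₀ : x₀ ∈ F) (ε δ₀ : ℝ) (hε : 0 < ε)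
    (hδ : ∀ y ∈ F, |y - x₀| < δ₀ → |p y - p x₀| < ε / 2)
    (x : ℝ) (hx1 : x₀ < x) (hx2 : |x - x₀| < δ₀) (hx3 : ε ≤ |p x - p x₀|) :
    ∃ y, |y - x₀| ≤ |x - x₀| ∧ |p y - p x₀| = ε / 2 := by
  have hxx : |x - x₀| = x - x₀ := abs_of_nonneg (by linarith)
  set K := closure F ∩ Set.Icc x₀ x with hK
  have hKne : K.Nonempty := ⟨x₀, subset_closure hx₀, le_refl x₀, le_of_lt hx1⟩
  have hKcomp : IsCompact K := isCompact_Icc.inter_left isClosed_closure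
  have haK : sSup K ∈ K := hKcomp.sSup_mem hKne
  set a := sSup K with ha
  obtain ⟨haF, hax₀, hax⟩ := haK
  have haa : |a - x₀| = a - x₀ := abs_of_nonneg (by linarith)
  have hadist : |a - x₀| < δ₀ := by rw [haa]; rw [hxx] at hx2; linarith
  have hpa : |p a - p x₀| ≤ ε / 2 := by
    by_cases haF' : a ∈ F
    · exact le_of_lt (hδ a haF' hadist)
    · have haG : a ∈ G := by
        rw [hF] at haF'; simpa using haF'
      have hc := hGc a haG
      refine le_of_forall_pos_le_add ?_
      intro η hη
      rw [Metric.continuousAt_iff] at hc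
      obtain ⟨δ₁, hδ₁, hc⟩ := hc η hη
      have hr : 0 < min δ₁ (δ₀ - |a - x₀|) := lt_min hδ₁ (by linarith)
      obtain ⟨f, hfF, hfd⟩ := Metric.mem_closure_iff.mp haF _ hr
      rw [Real.dist_eq] at hfd
      have h1 : |p f - p a| < η := by
        have : dist f a < δ₁ := by
          rw [Real.dist_eq, abs_sub_comm]
          exact lt_of_lt_of_le hfd (min_le_left _ _)
        have := hc this
        rwa [Real.dist_eq] at this
      have h2 : |f - x₀| < δ₀ := by
        calc |f - x₀| ≤ |f - a| + |a - x₀| := abs_sub_le f a x₀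
          _ < (δ₀ - |a - x₀|) + |a - x₀| := by
              rw [abs_sub_comm]
              exact add_lt_add_left (lt_of_lt_of_le hfd (min_le_right _ _)) _
          _ = δ₀ := by ring
      have h3 := hδ f hfF h2
      calc |p a - p x₀| ≤ |p a - p f| + |p f - p x₀| := abs_sub_le _ _ _
        _ ≤ ε / 2 + η := by rw [abs_sub_comm]; linarith
  have hIoo : Set.Ioo a x ⊆ G := by
    intro t ht
    by_contra htG
    have htF : t ∈ closure F := subset_closure (by rw [hF]; exact htG)
    have hta : t ≤ a := le_csSup hKcomp.bddAbove
      ⟨htF, le_trans hax₀ (le_of_lt ht.1), le_of_lt ht.2⟩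
    linarith [ht.1]
  have hcont : ContinuousOn p (Set.Icc a x) := hext a x hIoo
  have hg : ContinuousOn (fun t => |p t - p x₀|) (Set.Icc a x) :=
    (hcont.sub continuousOn_const).abs
  have hiv := intermediate_value_Icc hax hg
  have hmem : ε / 2 ∈ Set.Icc (|p a - p x₀|) (|p x - p x₀|) := ⟨hpa, by linarith⟩
  obtain ⟨y, hy, hpy⟩ := hiv hmem
  refine ⟨y, ?_, hpy⟩
  rw [abs_of_nonneg (by linarith [hy.1] : (0:ℝ) ≤ y - x₀), hxx]
  linarith [hy.2]

theorem stmt_6 (p : ℝ → ℝ) (hgraph : IsClosed {q : ℝ × ℝ | q.2 = p q.1})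
    (G : Set ℝ) (hG : G = {x | ContinuousAt p x}) (F : Set ℝ) (hF : F = Gᶜ)
    (hnoiso : ∀ x ∈ F, x ∈ closure (F \ {x}))
    (hdense : Dense G)
    (hext : ∀ a b : ℝ, Set.Ioo a b ⊆ G → ContinuousOn p (Set.Icc a b)) :
    ∀ x₀ ∈ F, ContinuousWithinAt p F x₀ → ContinuousAt p x₀ := by
  intro x₀ hx₀ hcw
  have hGc : ∀ x ∈ G, ContinuousAt p x := by
    intro x hx; rw [hG] at hx; exact hx
  rw [Metric.continuousAt_iff]
  intro ε hε
  by_contra hcon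
  push_neg at hcon
  -- get δ₀ from continuity within F
  rw [Metric.continuousWithinAt_iff] at hcw
  obtain ⟨δ₀, hδ₀, hδ⟩ := hcw (ε / 2) (by linarith)
  have hδ' : ∀ y ∈ F, |y - x₀| < δ₀ → |p y - p x₀| < ε / 2 := by
    intro y hy hyd
    have := hδ hy (by rwa [Real.dist_eq])
    rwa [Real.dist_eq] at this
  -- the closed set C
  set C : Set ℝ := {t | p x₀ + ε / 2 = p t} ∪ {t | p x₀ - ε / 2 = p t} with hC
  have hCclosed : IsClosed C := by
    apply IsClosed.union
    · exact hgraph.preimage (Continuous.prodMk_left (p x₀ + ε / 2))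
    · exact hgraph.preimage (Continuous.prodMk_left (p x₀ - ε / 2))
  have hx₀C : x₀ ∈ C := by
    rw [← hCclosed.closure_eq]
    rw [Metric.mem_closure_iff]
    intro r hr
    obtain ⟨x, hxd, hxp⟩ := hcon (min r δ₀) (lt_min hr hδ₀)
    rw [Real.dist_eq] at hxd hxp
    have hxd1 : |x - x₀| < r := lt_of_lt_of_le hxd (min_le_left _ _)
    have hxd2 : |x - x₀| < δ₀ := lt_of_lt_of_le hxd (min_le_right _ _)
    have hxne : x ≠ x₀ := by
      intro h; rw [h] at hxp; simp at hxp; linarith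
    have key : ∃ y, |y - x₀| ≤ |x - x₀| ∧ |p y - p x₀| = ε / 2 := by
      rcases lt_or_gt_of_ne hxne with h | h
      · -- x < x₀ : reflect
        have hrefl := helper6 (fun t => p (-t)) (Neg.neg ⁻¹' G) (Neg.neg ⁻¹' F)
          (by rw [hF]; rfl)
          (by intro z hz
              exact (hGc (-z) hz).comp continuous_neg.continuousAt)
          (by intro a b hab
              have h1 : Set.Ioo (-b) (-a) ⊆ G := by
                intro t ht
                have : -t ∈ Set.Ioo a b := ⟨by linarith [ht.2], by linarith [ht.1]⟩
                have := hab this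
                simpa using this
              have h2 := hext (-b) (-a) h1
              intro t ht
              exact (h2 (-t) ⟨by linarith [ht.2], by linarith [ht.1]⟩).comp
                continuous_neg.continuousWithinAt
                (by intro s hs; exact ⟨by linarith [hs.2], by linarith [hs.1]⟩))
          (-x₀) (by simpa using hx₀) ε δ₀ hε
          (by intro y hy hyd
              have h1 : -y ∈ F := hy
              have h2 : |(-y) - x₀| < δ₀ := by
                rw [show (-y) - x₀ = -(y - -x₀) by ring, abs_neg]; exact hyd
              have := hδ' (-y) h1 h2
              simpa using this)
          (-x) (by linarith) (by rw [show -x - -x₀ = -(x - x₀) by ring, abs_neg]; exact hxd2)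
          (by simpa using hxp)
        obtain ⟨y, hy1, hy2⟩ := hrefl
        refine ⟨-y, ?_, by simpa using hy2⟩
        rw [show -y - x₀ = -(y - -x₀) by ring, abs_neg]
        rw [show x - x₀ = -(-x - -x₀) by ring, abs_neg] 
        exact hy1
      · exact helper6 p G F hF hGc hext x₀ hx₀ ε δ₀ hε hδ' x h hxd2 hxp
    obtain ⟨y, hy1, hy2⟩ := key
    refine ⟨y, ?_, ?_⟩
    · rcases abs_eq (by linarith : (0:ℝ) ≤ ε / 2) |>.mp hy2 with h | h
      · left; simp only [Set.mem_setOf_eq]; linarith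
      · right; simp only [Set.mem_setOf_eq]; linarith
    · rw [Real.dist_eq, abs_sub_comm]
      exact lt_of_le_of_lt hy1 hxd1
  rcases hx₀C with h | h <;> simp only [Set.mem_setOf_eq] at h <;> linarith
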